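/- Let D, H > 0 with D ≤ 2H/√3, and let d_min ≥ 0. Then the function ψ(x) = 1/((x+D/2)² + H²) + 1/((x−D/2)² + H²) restricted to x ≥ d_min/2 satisfies ψ(x) ≤ ψ(d_min/2) for all x ≥ d_min/2; that is, in the CoMP uplink the common-rate-optimal symmetric hovering displacement is x* = d_min/2 when the devices are close. -/
import Mathlib

lemma key15 (a x c H : ℝ) (ha : 0 ≤ a) (hax : a ≤ x) (hc : 0 < c)
    (h3 : 3 * c ^ 2 ≤ H ^ 2) :
    0 ≤ (x + a + 2*c) * (((a - c) ^ 2 + H ^ 2) * ((x - c) ^ 2 + H ^ 2)) +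
        (x + a - 2*c) * (((a + c) ^ 2 + H ^ 2) * ((x + c) ^ 2 + H ^ 2)) := by
  have hx : 0 ≤ x := ha.trans hax
  have hxa : 0 ≤ x + a := by linarith
  have hsub : 0 ≤ H ^ 2 - 3 * c ^ 2 := by linarith
  have hpos : 0 ≤ H ^ 2 + c ^ 2 := by positivity
  have h1 : 0 ≤ (x + a) * (H ^ 2 - 3 * c ^ 2) * (H ^ 2 + c ^ 2) :=
    mul_nonneg (mul_nonneg hxa hsub) hpos
  have h2 : 0 ≤ (x^3 + a^3 + a*x^2 + a^2*x) * (H ^ 2 + c ^ 2) :=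
    mul_nonneg (by positivity) hpos
  have h3' : 0 ≤ a^2 * x^2 * (x + a) := by positivity
  nlinarith [h1, h2, h3']

theorem stmt_15 (D H dmin : ℝ) (hD : 0 < D) (hH : 0 < H) (hd : 0 ≤ dmin)
    (hDH : D ≤ 2 * H / Real.sqrt 3) :
    ∀ x : ℝ, dmin / 2 ≤ x →
      1 / ((x + D / 2) ^ 2 + H ^ 2) + 1 / ((x - D / 2) ^ 2 + H ^ 2) ≤
        1 / ((dmin / 2 + D / 2) ^ 2 + H ^ 2) + 1 / ((dmin / 2 - D / 2) ^ 2 + H ^ 2) := by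
  intro x hx
  set a := dmin / 2 with ha_def
  set c := D / 2 with hc_def
  have ha : 0 ≤ a := by positivity
  have hc : 0 < c := by positivity
  have h3 : 3 * c ^ 2 ≤ H ^ 2 := by
    have hs3 : (0:ℝ) < Real.sqrt 3 := Real.sqrt_pos.2 (by norm_num)
    have hD3 : D * Real.sqrt 3 ≤ 2 * H := by
      rw [div_eq_mul_inv] at hDH
      calc D * Real.sqrt 3 ≤ (2 * H * (Real.sqrt 3)⁻¹) * Real.sqrt 3 := by
            apply mul_le_mul_of_nonneg_right hDH hs3.le
        _ = 2 * H := by field_simp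
    have h9 : (D * Real.sqrt 3)^2 ≤ (2*H)^2 := by
      apply sq_le_sq' _ hD3
      nlinarith [mul_pos hD hs3]
    have hsq : Real.sqrt 3 ^ 2 = 3 := Real.sq_sqrt (by norm_num)
    rw [mul_pow, hsq] at h9
    rw [hc_def]
    nlinarith [h9]
  have hA : (0:ℝ) < (a + c) ^ 2 + H ^ 2 := by positivity
  have hB : (0:ℝ) < (a - c) ^ 2 + H ^ 2 := by positivity
  have hA' : (0:ℝ) < (x + c) ^ 2 + H ^ 2 := by positivity
  have hB' : (0:ℝ) < (x - c) ^ 2 + H ^ 2 := by positivity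
  rw [div_add_div _ _ hA'.ne' hB'.ne', div_add_div _ _ hA.ne' hB.ne',
    div_le_div_iff₀ (by positivity) (by positivity)]
  have hkey := key15 a x c H ha hx hc h3
  nlinarith [mul_nonneg (sub_nonneg.2 hx) hkey]
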